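/- arXiv:2506.01058 — 3 statements merged into one kernel-verified Lean document; each statement's English description precedes it below -/
import Mathlib

section
/- Let V be a nonzero finite-dimensional real vector space, B a nondegenerate symmetric bilinear form on V, c a positive real number, and A : V → V a linear map that is skew-adjoint with respect to B and satisfies A ∘ A = c · id_V. Then both √c and -√c are eigenvalues of A. -/
/-- If `A` is skew-adjoint with respect to a nondegenerate symmetric bilinear
form `B` on a nonzero finite-dimensional real vector space and `A ∘ A = c • id`
with `c > 0`, then both `√c` and `-√c` are eigenvalues of `A`. -/
theorem eigenvalues_pm_sqrt_of_sq_eq_smul_id (V : Type*) [AddCommGroup V]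
    [Module ℝ V] [FiniteDimensional ℝ V] [Nontrivial V]
    (B : V →ₗ[ℝ] V →ₗ[ℝ] ℝ)
    (hsymm : ∀ x y : V, B x y = B y x)
    (hnd : ∀ x : V, (∀ y : V, B x y = 0) → x = 0)
    (c : ℝ) (hc : 0 < c) (A : V →ₗ[ℝ] V)
    (hskew : ∀ x y : V, B (A x) y = -B x (A y))
    (hsq : A ∘ₗ A = c • LinearMap.id) :
    Module.End.HasEigenvalue A (Real.sqrt c) ∧
      Module.End.HasEigenvalue A (-Real.sqrt c) := by
  set s := Real.sqrt c with hsdef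
  have hs0 : s ≠ 0 := ne_of_gt (Real.sqrt_pos.mpr hc)
  have hs2 : s * s = c := Real.mul_self_sqrt hc.le
  have hA2 : ∀ x : V, A (A x) = c • x := by
    intro x
    simpa using LinearMap.congr_fun hsq x
  -- A cannot act as μ • id for μ ≠ 0
  have hnotscalar : ∀ μ : ℝ, μ ≠ 0 → ¬(∀ x : V, A x = μ • x) := by
    intro μ hμ hA
    obtain ⟨x, hx⟩ := exists_ne (0 : V)
    apply hx
    apply hnd
    intro y
    have h := hskew x y
    rw [hA x, hA y] at h
    simp only [map_smul, LinearMap.map_smul, LinearMap.smul_apply, smul_eq_mul] at h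
    have h3 : (2 * μ) * B x y = 0 := by linarith
    have h2 : (2 * μ) ≠ 0 := by
      simpa using hμ
    exact (mul_eq_zero.mp h3).resolve_left h2
  have key : ∀ a : ℝ, a ≠ 0 → a * a = c → Module.End.HasEigenvalue A a := by
    intro a ha haa
    by_contra h
    rw [Module.End.hasEigenvalue_iff, not_ne_iff] at h
    have hAeq : ∀ x : V, A x = (-a) • x := by
      intro x
      have hmem : A x + a • x ∈ Module.End.eigenspace A a := by
        rw [Module.End.mem_eigenspace_iff]
        show A (A x + a • x) = a • (A x + a • x)
        rw [map_add, map_smul, hA2, smul_add, smul_smul, haa]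
        abel
      rw [h, Submodule.mem_bot] at hmem
      have : A x = -(a • x) := by linear_combination (norm := abel) hmem
      rw [this, neg_smul]
    exact hnotscalar (-a) (neg_ne_zero.mpr ha) hAeq
  exact ⟨key s hs0 hs2, key (-s) (neg_ne_zero.mpr hs0) (by rw [neg_mul_neg, hs2])⟩
end

section
/- Let V be a finite-dimensional real vector space, B a nondegenerate symmetric bilinear form on V, c a positive real number, and A : V → V a linear map that is skew-adjoint with respect to B and satisfies B(Ax, Ay) = c · B(x, y) for all x, y ∈ V. Then every eigenvalue λ ∈ ℂ of the complexification of A is purely imaginary (has real part zero). In particular, for a pseudo-H-type Lie algebra and a central element Z with ⟨Z, Z⟩ > 0, all eigenvalues of j(Z) are purely imaginary. -/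
/-- If `A` is skew-adjoint with respect to a nondegenerate symmetric bilinear
form `B` on a finite-dimensional real vector space and satisfies
`B (A x) (A y) = c * B x y` with `c > 0` (as the `j`-mapping `j(Z)` of a
pseudo-`H`-type Lie algebra at a central element with `⟨Z, Z⟩ = c > 0` does),
then every eigenvalue of the complexification of `A` is purely imaginary. -/
theorem spectrum_purely_imaginary_of_pseudoH_pos (V : Type*) [AddCommGroup V]
    [Module ℝ V] [FiniteDimensional ℝ V]
    (B : V →ₗ[ℝ] V →ₗ[ℝ] ℝ)
    (hsymm : ∀ x y : V, B x y = B y x)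
    (hnd : ∀ x : V, (∀ y : V, B x y = 0) → x = 0)
    (c : ℝ) (hc : 0 < c) (A : V →ₗ[ℝ] V)
    (hskew : ∀ x y : V, B (A x) y = -B x (A y))
    (hAc : ∀ x y : V, B (A x) (A y) = c * B x y) :
    ∀ μ ∈ spectrum ℂ (A.baseChange ℂ), μ.re = 0 := by
  have hA2 : A ∘ₗ A = (-c) • LinearMap.id := by
    apply LinearMap.ext
    intro x
    have h0 : A (A x) + c • x = 0 := by
      apply hnd
      intro y
      have h1 : B (A (A x)) y = -(c * B x y) := by
        have := hskew (A x) y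
        rw [this, hAc]
      simp only [map_add, LinearMap.add_apply, map_smul, LinearMap.smul_apply, h1,
        smul_eq_mul]
      ring
    rw [add_eq_zero_iff_eq_neg] at h0
    simp only [LinearMap.comp_apply, LinearMap.smul_apply, LinearMap.id_apply, h0, neg_smul]
    simp
  have hB2 : (A.baseChange ℂ) * (A.baseChange ℂ) = algebraMap ℂ _ (-c : ℂ) := by
    have hcomp : (A.baseChange ℂ) ∘ₗ (A.baseChange ℂ) = ((-c : ℝ) • LinearMap.id).baseChange ℂ := by
      rw [← LinearMap.baseChange_comp, hA2]
    rw [Module.algebraMap_end_eq_smul_id]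
    calc (A.baseChange ℂ) * (A.baseChange ℂ) = (A.baseChange ℂ) ∘ₗ (A.baseChange ℂ) := rfl
      _ = ((-c : ℝ) • LinearMap.id).baseChange ℂ := hcomp
      _ = (-c : ℂ) • LinearMap.id := by
          apply LinearMap.ext; intro x
          induction x using TensorProduct.induction_on with
          | zero => simp
          | tmul a b =>
              rw [LinearMap.baseChange_tmul]
              simp only [LinearMap.smul_apply, LinearMap.id_apply]
              rw [← TensorProduct.smul_tmul, TensorProduct.smul_tmul']
              congr 1
              simp [Complex.real_smul]
          | add x y hx hy =>
              simp only [map_add, hx, hy]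
  intro μ hμ
  have hsq : μ ^ 2 ∈ spectrum ℂ ((A.baseChange ℂ) * (A.baseChange ℂ)) := by
    have hsub := spectrum.subset_polynomial_aeval (𝕜 := ℂ) (A.baseChange ℂ) (Polynomial.X ^ 2)
    have hmem : μ ^ 2 ∈ (fun k => Polynomial.eval k (Polynomial.X ^ 2 : Polynomial ℂ)) '' spectrum ℂ (A.baseChange ℂ) :=
      ⟨μ, hμ, by simp⟩
    have := hsub hmem
    simpa [pow_two] using this
  rw [hB2, spectrum.mem_iff] at hsq
  have hne : μ ^ 2 = -c := by
    by_contra h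
    apply hsq
    rw [← map_sub]
    exact (IsUnit.map (algebraMap ℂ _) (isUnit_iff_ne_zero.2 (sub_ne_zero.2 h)))
  have h1 : μ.re ^ 2 - μ.im ^ 2 = -c := by
    have := congrArg Complex.re hne
    simpa [pow_two, Complex.mul_re] using this
  have h2 : μ.re * μ.im = 0 := by
    have := congrArg Complex.im hne
    simp only [pow_two, Complex.mul_im, Complex.neg_im, Complex.ofReal_im, neg_zero] at this
    nlinarith [this]
  rcases mul_eq_zero.mp h2 with h | h
  · exact h
  · exfalso; rw [h] at h1; nlinarith
end

section
/- Let V be a finite-dimensional real vector space, B a nondegenerate symmetric bilinear form on V, c a negative real number, and A : V → V a linear map that is skew-adjoint with respect to B and satisfies B(Ax, Ay) = c · B(x, y) for all x, y ∈ V. Then every eigenvalue λ ∈ ℂ of the complexification of A is real (has imaginary part zero). In particular, for a pseudo-H-type Lie algebra and a central element Z with ⟨Z, Z⟩ < 0, all eigenvalues of j(Z) are real, so the corresponding equilibrium of the Lie-Poisson equation is unstable. -/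
/-- If `A` is skew-adjoint with respect to a nondegenerate symmetric bilinear
form `B` on a finite-dimensional real vector space and satisfies
`B (A x) (A y) = c * B x y` with `c < 0` (as the `j`-mapping `j(Z)` of a
pseudo-`H`-type Lie algebra at a central element with `⟨Z, Z⟩ = c < 0` does),
then every eigenvalue of the complexification of `A` is real. -/
theorem spectrum_real_of_pseudoH_neg (V : Type*) [AddCommGroup V]
    [Module ℝ V] [FiniteDimensional ℝ V]
    (B : V →ₗ[ℝ] V →ₗ[ℝ] ℝ)
    (hsymm : ∀ x y : V, B x y = B y x)
    (hnd : ∀ x : V, (∀ y : V, B x y = 0) → x = 0)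
    (c : ℝ) (hc : c < 0) (A : V →ₗ[ℝ] V)
    (hskew : ∀ x y : V, B (A x) y = -B x (A y))
    (hAc : ∀ x y : V, B (A x) (A y) = c * B x y) :
    ∀ μ ∈ spectrum ℂ (A.baseChange ℂ), μ.im = 0 := by
  -- Step 1: A ∘ A = (-c) • id
  have hA2 : A ∘ₗ A = (-c) • LinearMap.id := by
    apply LinearMap.ext
    intro x
    have key : ∀ y : V, B (A (A x) - (-c) • x) y = 0 := by
      intro y
      have h1 : B (A (A x)) y = - B (A x) (A y) := hskew (A x) y
      rw [map_sub, map_smul, LinearMap.sub_apply, LinearMap.smul_apply, h1,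
        hAc x y]
      simp
    have := hnd _ key
    have h := sub_eq_zero.mp this
    simpa using h
  -- Step 2: T * T = algebraMap ℂ _ (-c)
  set T := A.baseChange ℂ with hT
  have hT2 : T * T = algebraMap ℂ (Module.End ℂ (TensorProduct ℝ ℂ V)) (-c : ℝ) := by
    have h1 : T * T = (A ∘ₗ A).baseChange ℂ := by
      rw [LinearMap.baseChange_comp]; rfl
    rw [h1, hA2, LinearMap.baseChange_smul, LinearMap.baseChange_id]
    ext v
    simp [Module.algebraMap_end_apply, Algebra.smul_def]
    rfl
  intro μ hμ
  by_contra him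
  -- Then μ^2 ≠ -c, so μ•1 - T is invertible
  have hμ2 : (μ * μ : ℂ) ≠ ((-c : ℝ) : ℂ) := by
    intro h
    have hre : μ.re * μ.re - μ.im * μ.im = -c := by
      have := congrArg Complex.re h
      simpa [Complex.mul_re] using this
    have him2 : μ.re * μ.im + μ.im * μ.re = 0 := by
      have := congrArg Complex.im h
      simpa [Complex.mul_im] using this
    have hre0 : μ.re = 0 := by
      rcases mul_eq_zero.mp (by linarith [him2] : μ.re * μ.im = 0) with h | h
      · exact h
      · exact absurd h him
    rw [hre0] at hre
    nlinarith
  apply spectrum.notMem_iff.mpr _ hμ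
  set R := Module.End ℂ (TensorProduct ℝ ℂ V)
  set a : R := algebraMap ℂ R μ - T with ha
  set b : R := algebraMap ℂ R μ + T with hb
  have hcomm : (algebraMap ℂ R μ) * T = T * (algebraMap ℂ R μ) :=
    Algebra.commutes μ T
  have hab : a * b = algebraMap ℂ R (μ * μ - ((-c : ℝ) : ℂ)) := by
    rw [ha, hb, map_sub, map_mul, ← hT2, sub_mul, mul_add, mul_add, hcomm]
    abel
  have hba : b * a = algebraMap ℂ R (μ * μ - ((-c : ℝ) : ℂ)) := by
    rw [ha, hb, map_sub, map_mul, ← hT2, add_mul, mul_sub, mul_sub, hcomm]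
    abel
  set s : ℂ := μ * μ - ((-c : ℝ) : ℂ) with hs
  have hs0 : s ≠ 0 := sub_ne_zero.mpr hμ2
  set v : R := algebraMap ℂ R s⁻¹ with hv
  have h1 : a * (b * v) = 1 := by
    rw [← mul_assoc, hab, hv, ← map_mul, mul_inv_cancel₀ hs0, map_one]
  have h2 : (b * v) * a = 1 := by
    rw [mul_assoc, hv, show algebraMap ℂ R s⁻¹ * a = a * algebraMap ℂ R s⁻¹ from
      (Algebra.commutes s⁻¹ a),
      ← mul_assoc, hba, ← map_mul, mul_inv_cancel₀ hs0, map_one]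
  exact ⟨⟨a, b * v, h1, h2⟩, rfl⟩
end
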